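/- Let α > -1 and β > α. Then for all λ ≥ 0, j_β(λ) = (b_β^{-1}/(2^{β-α-1} Γ(β-α))) ∫_0^1 (1-t²)^{β-α-1} j_α(λt) b_α t^{2α+1} dt, where b_γ^{-1} = 2^γ Γ(γ+1). -/

import Mathlib

open MeasureTheory Set Filter

/-- The normalized Bessel function `j_α`, given by its power series. -/
noncomputable def besselJ (α : ℝ) (x : ℝ) : ℝ :=
  ∑' k : ℕ, (-1 : ℝ) ^ k * Real.Gamma (α + 1) * (x / 2) ^ (2 * k) /
    ((Nat.factorial k : ℝ) * Real.Gamma ((k : ℝ) + α + 1))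


lemma beta_ofReal {a b x : ℝ} (hx : x ∈ Ioo (0:ℝ) 1) :
    (x:ℂ) ^ ((a:ℂ) - 1) * (1 - (x:ℂ)) ^ ((b:ℂ) - 1)
      = ((x ^ (a - 1) * (1 - x) ^ (b - 1) : ℝ) : ℂ) := by
  rw [Complex.ofReal_mul, Complex.ofReal_cpow hx.1.le, Complex.ofReal_cpow (by linarith [hx.2])]
  push_cast
  ring_nf

lemma realBeta_integrable {a b : ℝ} (ha : 0 < a) (hb : 0 < b) :
    IntegrableOn (fun x : ℝ => x ^ (a - 1) * (1 - x) ^ (b - 1)) (Ioo 0 1) := by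
  have hc := Complex.betaIntegral_convergent (u := (a:ℂ)) (v := (b:ℂ)) (by simpa) (by simpa)
  rw [intervalIntegrable_iff, uIoc_of_le zero_le_one] at hc
  have hc' : IntegrableOn (fun x : ℝ => (x:ℂ) ^ ((a:ℂ) - 1) * (1 - (x:ℂ)) ^ ((b:ℂ) - 1))
      (Ioo 0 1) := hc.mono_set Ioo_subset_Ioc_self
  refine (hc'.norm).mono ?_ ?_
  · apply Measurable.aestronglyMeasurable
    fun_prop
  · filter_upwards [ae_restrict_mem measurableSet_Ioo] with x hx
    rw [Real.norm_eq_abs, norm_norm, beta_ofReal hx, Complex.norm_real, Real.norm_eq_abs]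

lemma realBeta_eq {a b : ℝ} (ha : 0 < a) (hb : 0 < b) :
    ∫ x in Ioo (0:ℝ) 1, x ^ (a - 1) * (1 - x) ^ (b - 1)
      = Real.Gamma a * Real.Gamma b / Real.Gamma (a + b) := by
  have key := Complex.Gamma_mul_Gamma_eq_betaIntegral (s := (a:ℂ)) (t := (b:ℂ)) (by simpa) (by simpa)
  have hB : Complex.betaIntegral (a:ℂ) (b:ℂ)
      = ((∫ x in Ioo (0:ℝ) 1, x ^ (a - 1) * (1 - x) ^ (b - 1) : ℝ) : ℂ) := by
    calc Complex.betaIntegral (a:ℂ) (b:ℂ)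
        = ∫ x in Ioo (0:ℝ) 1, ((x ^ (a - 1) * (1 - x) ^ (b - 1) : ℝ) : ℂ) := by
          rw [Complex.betaIntegral, intervalIntegral.integral_of_le zero_le_one,
            MeasureTheory.integral_Ioc_eq_integral_Ioo]
          exact setIntegral_congr_fun measurableSet_Ioo fun x hx => beta_ofReal hx
      _ = _ := integral_ofReal
  rw [hB, Complex.Gamma_ofReal, Complex.Gamma_ofReal, ← Complex.ofReal_add,
    Complex.Gamma_ofReal, ← Complex.ofReal_mul, ← Complex.ofReal_mul] at key
  have hG : Real.Gamma (a + b) ≠ 0 := (Real.Gamma_pos_of_pos (by linarith)).ne'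
  have := Complex.ofReal_injective key
  field_simp
  linarith [this]

lemma sq_image_Ioo : (fun t : ℝ => t ^ 2) '' Ioo 0 1 = Ioo 0 1 := by
  ext s
  constructor
  · rintro ⟨t, ht, rfl⟩
    refine ⟨pow_pos ht.1 2, ?_⟩
    show t ^ 2 < 1
    nlinarith [ht.1, ht.2]
  · rintro ⟨hs0, hs1⟩
    exact ⟨Real.sqrt s, ⟨Real.sqrt_pos.2 hs0, by
      rw [show (1:ℝ) = Real.sqrt 1 by simp]; exact Real.sqrt_lt_sqrt hs0.le hs1⟩,
      Real.sq_sqrt hs0.le⟩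

lemma sq_deriv_within : ∀ x ∈ Ioo (0:ℝ) 1,
    HasDerivWithinAt (fun t : ℝ => t ^ 2) (2 * x) (Ioo 0 1) x := by
  intro x _
  simpa using (hasDerivAt_pow 2 x).hasDerivWithinAt

lemma sq_injOn : InjOn (fun t : ℝ => t ^ 2) (Ioo 0 1) := by
  intro x hx y hy h
  simp only at h
  nlinarith [hx.1, hy.1]

lemma pointwise_eq {a b x : ℝ} (hx : x ∈ Ioo (0:ℝ) 1) :
    |2 * x| • ((x ^ 2) ^ (a - 1) * (1 - x ^ 2) ^ (b - 1))
      = 2 * ((1 - x ^ 2) ^ (b - 1) * x ^ (2 * a - 1)) := by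
  have hx0 : (0:ℝ) < x := hx.1
  have h1 : ((x:ℝ) ^ 2) ^ (a - 1) = x ^ (2 * (a - 1)) := by
    rw [← Real.rpow_natCast x 2, ← Real.rpow_mul hx0.le]
    norm_num
  have h2 : x ^ (2 * (a - 1)) * x = x ^ (2 * a - 1) := by
    nth_rewrite 2 [← Real.rpow_one x]
    rw [← Real.rpow_add hx0]
    ring_nf
  rw [abs_of_pos (by positivity), smul_eq_mul, h1]
  rw [← h2]
  ring

lemma subst_integrable {a b : ℝ} (ha : 0 < a) (hb : 0 < b)
    (hbeta : IntegrableOn (fun x : ℝ => x ^ (a - 1) * (1 - x) ^ (b - 1)) (Ioo 0 1)) :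
    IntegrableOn (fun t : ℝ => (1 - t ^ 2) ^ (b - 1) * t ^ (2 * a - 1)) (Ioo 0 1) := by
  have key := (integrableOn_image_iff_integrableOn_abs_deriv_smul measurableSet_Ioo
    sq_deriv_within sq_injOn (fun x : ℝ => x ^ (a - 1) * (1 - x) ^ (b - 1))).mp
    (by rwa [sq_image_Ioo])
  have : IntegrableOn (fun x : ℝ => 2 * ((1 - x ^ 2) ^ (b - 1) * x ^ (2 * a - 1)))
      (Ioo 0 1) := by
    exact key.congr_fun (fun x hx => pointwise_eq hx) measurableSet_Ioo
  simpa [IntegrableOn] using this.const_mul (2⁻¹ : ℝ)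

lemma subst_eq {a b : ℝ} (ha : 0 < a) (hb : 0 < b) :
    ∫ t in Ioo (0:ℝ) 1, (1 - t ^ 2) ^ (b - 1) * t ^ (2 * a - 1)
      = Real.Gamma a * Real.Gamma b / (2 * Real.Gamma (a + b)) := by
  have key := integral_image_eq_integral_abs_deriv_smul measurableSet_Ioo
    sq_deriv_within sq_injOn (fun x : ℝ => x ^ (a - 1) * (1 - x) ^ (b - 1))
  rw [sq_image_Ioo, realBeta_eq ha hb] at key
  rw [setIntegral_congr_fun measurableSet_Ioo (fun x hx => pointwise_eq hx)] at key
  rw [MeasureTheory.integral_const_mul] at key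
  have hG : Real.Gamma (a + b) ≠ 0 := (Real.Gamma_pos_of_pos (by linarith)).ne'
  field_simp at key ⊢
  linarith


lemma gamma_pos_k {α : ℝ} (hα : -1 < α) (k : ℕ) : 0 < Real.Gamma ((k:ℝ) + α + 1) :=
  Real.Gamma_pos_of_pos (by have : (0:ℝ) ≤ k := Nat.cast_nonneg k; linarith)

lemma summable_g {α : ℝ} (hα : -1 < α) (y : ℝ) (hy : 0 ≤ y) :
    Summable (fun k : ℕ => Real.Gamma (α + 1) * y ^ k /
      ((Nat.factorial k : ℝ) * Real.Gamma ((k:ℝ) + α + 1))) := by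
  set g : ℕ → ℝ := fun k => Real.Gamma (α + 1) * y ^ k /
      ((Nat.factorial k : ℝ) * Real.Gamma ((k:ℝ) + α + 1)) with hg
  have hgpos : ∀ k, 0 ≤ g k := fun k => by
    have := gamma_pos_k hα k
    have := Real.Gamma_pos_of_pos (show (0:ℝ) < α + 1 by linarith)
    positivity
  obtain ⟨N, hN⟩ := exists_nat_ge (max (2 * y) (-α))
  refine summable_of_ratio_norm_eventually_le (r := 1/2) (by norm_num)
    (eventually_atTop.mpr ⟨N, fun k hk => ?_⟩)
  have hkN : (N:ℝ) ≤ (k:ℝ) := Nat.cast_le.mpr hk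
  have hk1 : 2 * y ≤ (k:ℝ) + 1 := by
    have := (le_max_left (2*y) (-α)).trans (hN.trans hkN); linarith
  have hk2 : (1:ℝ) ≤ (k:ℝ) + α + 1 := by
    have := (le_max_right (2*y) (-α)).trans (hN.trans hkN); linarith
  have hGk := gamma_pos_k hα k
  have hfact : (0:ℝ) < (Nat.factorial k : ℝ) := by positivity
  have hstep : g (k+1) = g k * (y / (((k:ℝ) + 1) * ((k:ℝ) + α + 1))) := by
    have hGrec : Real.Gamma (((k+1:ℕ):ℝ) + α + 1) = ((k:ℝ) + α + 1) * Real.Gamma ((k:ℝ) + α + 1) := by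
      push_cast
      rw [show (k:ℝ) + 1 + α + 1 = ((k:ℝ) + α + 1) + 1 by ring,
        Real.Gamma_add_one (by positivity)]
    have hfrec : ((Nat.factorial (k+1) : ℕ) : ℝ) = ((k:ℝ) + 1) * (Nat.factorial k : ℝ) := by
      push_cast [Nat.factorial_succ]; ring
    rw [hg]
    simp only []
    rw [hGrec, hfrec, pow_succ]
    field_simp
  rw [Real.norm_eq_abs, Real.norm_eq_abs, abs_of_nonneg (hgpos _), abs_of_nonneg (hgpos _), hstep]
  have hratio : y / (((k:ℝ) + 1) * ((k:ℝ) + α + 1)) ≤ 1/2 := by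
    rw [div_le_iff₀ (by positivity)]
    nlinarith
  calc g k * (y / (((k:ℝ) + 1) * ((k:ℝ) + α + 1))) ≤ g k * (1/2) :=
        mul_le_mul_of_nonneg_left hratio (hgpos k)
    _ = 1/2 * g k := by ring

lemma abs_term {α x : ℝ} (hα : -1 < α) (k : ℕ) :
    |(-1:ℝ) ^ k * Real.Gamma (α + 1) * (x / 2) ^ (2 * k) /
      ((Nat.factorial k : ℝ) * Real.Gamma ((k : ℝ) + α + 1))|
    = Real.Gamma (α + 1) * ((x/2)^2) ^ k /
      ((Nat.factorial k : ℝ) * Real.Gamma ((k:ℝ) + α + 1)) := by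
  have h1 : ((x/2)^2 : ℝ) ^ k = (x/2) ^ (2*k) := by rw [← pow_mul]
  rw [h1, abs_div]
  congr 1
  · rw [abs_mul, abs_mul, abs_pow, abs_neg, abs_one, one_pow, one_mul,
      abs_of_nonneg (Real.Gamma_pos_of_pos (show (0:ℝ) < α + 1 by linarith)).le,
      abs_of_nonneg ((even_two_mul k).pow_nonneg (x/2))]
  · rw [abs_mul,
      abs_of_nonneg (by positivity : (0:ℝ) ≤ (Nat.factorial k : ℝ)),
      abs_of_nonneg (gamma_pos_k hα k).le]

lemma summable_term {α : ℝ} (hα : -1 < α) (x : ℝ) :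
    Summable (fun k : ℕ => (-1:ℝ) ^ k * Real.Gamma (α + 1) * (x / 2) ^ (2 * k) /
      ((Nat.factorial k : ℝ) * Real.Gamma ((k : ℝ) + α + 1))) := by
  rw [← summable_abs_iff]
  have := summable_g hα ((x/2)^2) (by positivity)
  exact this.congr fun k => (abs_term hα k).symm

/-- Sonine's first integral: for `β > α > -1` and `λ ≥ 0`,
`j_β(λ) = (b_β⁻¹/(2^{β-α-1} Γ(β-α))) ∫_0^1 (1-t²)^{β-α-1} j_α(λt) b_α t^{2α+1} dt`,
where `b_γ⁻¹ = 2^γ Γ(γ+1)`. -/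
theorem sonine_first_integral (α β : ℝ) (hα : α > -1) (hβ : β > α) (lam : ℝ)
    (hlam : 0 ≤ lam) :
    besselJ β lam =
      ((2 : ℝ) ^ β * Real.Gamma (β + 1)) / ((2 : ℝ) ^ (β - α - 1) * Real.Gamma (β - α)) *
        ∫ t in (0:ℝ)..1, (1 - t ^ 2) ^ (β - α - 1) * besselJ α (lam * t) *
          (((2 : ℝ) ^ α * Real.Gamma (α + 1))⁻¹ * t ^ (2 * α + 1)) := by
  have hb : 0 < β - α := sub_pos.mpr hβ
  have hβ' : (-1:ℝ) < β := lt_trans hα hβ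
  have hGα : 0 < Real.Gamma (α + 1) := Real.Gamma_pos_of_pos (by linarith)
  have hGβ : 0 < Real.Gamma (β + 1) := Real.Gamma_pos_of_pos (by linarith)
  have hGb : 0 < Real.Gamma (β - α) := Real.Gamma_pos_of_pos hb
  have h2α : (0:ℝ) < (2:ℝ) ^ α := Real.rpow_pos_of_pos two_pos α
  have h2β : (0:ℝ) < (2:ℝ) ^ β := Real.rpow_pos_of_pos two_pos β
  have h2ba : (0:ℝ) < (2:ℝ) ^ (β - α - 1) := Real.rpow_pos_of_pos two_pos _
  set e : ℝ := ((2:ℝ) ^ α * Real.Gamma (α + 1))⁻¹ with he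
  have he_pos : 0 < e := by rw [he]; positivity
  have hak : ∀ k : ℕ, (0:ℝ) < (k:ℝ) + α + 1 := fun k => by
    have : (0:ℝ) ≤ k := Nat.cast_nonneg k; linarith
  set u : ℕ → ℝ → ℝ := fun k t => (-1:ℝ)^k * Real.Gamma (α+1) * ((lam*t)/2)^(2*k) /
    ((Nat.factorial k : ℝ) * Real.Gamma ((k:ℝ)+α+1)) with hu
  set F : ℕ → ℝ → ℝ := fun k t => (1 - t^2)^(β-α-1) * u k t * (e * t^(2*α+1)) with hF
  set d : ℕ → ℝ := fun k => (-1:ℝ)^k * Real.Gamma (α+1) * (lam/2)^(2*k) /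
    ((Nat.factorial k : ℝ) * Real.Gamma ((k:ℝ)+α+1)) * e with hd
  set J : ℕ → ℝ := fun k => Real.Gamma ((k:ℝ)+α+1) * Real.Gamma (β-α) /
    (2 * Real.Gamma (((k:ℝ)+α+1) + (β-α))) with hJ
  -- pointwise identity on (0,1)
  have hFeq : ∀ (k : ℕ) (t : ℝ), t ∈ Ioo (0:ℝ) 1 →
      F k t = d k * ((1 - t^2)^(β-α-1) * t^(2*((k:ℝ)+α+1)-1)) := by
    intro k t ht
    have ht0 : 0 < t := ht.1
    have hp1 : ((lam*t)/2)^(2*k) = (lam/2)^(2*k) * t^(2*k) := by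
      rw [show (lam*t)/2 = (lam/2)*t by ring, mul_pow]
    have hp2 : (t:ℝ)^(2*k) * t^(2*α+1) = t^(2*((k:ℝ)+α+1)-1) := by
      rw [← Real.rpow_natCast t (2*k), ← Real.rpow_add ht0]
      congr 1
      push_cast; ring
    rw [hF, hu, hd]
    simp only []
    rw [hp1, ← hp2]
    ring
  -- integrability of each F k
  have hbase_int : ∀ k : ℕ, IntegrableOn
      (fun t : ℝ => (1 - t^2)^(β-α-1) * t^(2*((k:ℝ)+α+1)-1)) (Ioo 0 1) := fun k =>
    subst_integrable (hak k) hb (realBeta_integrable (hak k) hb)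
  have hFint : ∀ k : ℕ, IntegrableOn (F k) (Ioo 0 1) := by
    intro k
    have h1 : IntegrableOn (fun t : ℝ => d k * ((1 - t^2)^(β-α-1) * t^(2*((k:ℝ)+α+1)-1)))
        (Ioo 0 1) := (hbase_int k).const_mul (d k)
    exact h1.congr_fun (fun t ht => (hFeq k t ht).symm) measurableSet_Ioo
  -- value of each integral
  have hFval : ∀ k : ℕ, ∫ t in Ioo (0:ℝ) 1, F k t = d k * J k := by
    intro k
    rw [setIntegral_congr_fun measurableSet_Ioo (hFeq k), MeasureTheory.integral_const_mul,
      subst_eq (hak k) hb, hJ]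
  -- norm integrals
  have hbase_nonneg : ∀ (k : ℕ) (t : ℝ), t ∈ Ioo (0:ℝ) 1 →
      0 ≤ (1 - t^2)^(β-α-1) * t^(2*((k:ℝ)+α+1)-1) := by
    intro k t ht
    have h1 : (0:ℝ) ≤ 1 - t^2 := by nlinarith [ht.1, ht.2]
    exact mul_nonneg (Real.rpow_nonneg h1 _) (Real.rpow_nonneg ht.1.le _)
  have hJpos : ∀ k : ℕ, 0 < J k := by
    intro k
    rw [hJ]
    have h1 := gamma_pos_k hα k
    have h2 : 0 < Real.Gamma (((k:ℝ)+α+1) + (β-α)) :=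
      Real.Gamma_pos_of_pos (by have := hak k; linarith)
    positivity
  have hFnorm : ∀ k : ℕ, ∫ t in Ioo (0:ℝ) 1, ‖F k t‖ = |d k| * J k := by
    intro k
    have : ∀ t ∈ Ioo (0:ℝ) 1, ‖F k t‖ =
        |d k| * ((1 - t^2)^(β-α-1) * t^(2*((k:ℝ)+α+1)-1)) := by
      intro t ht
      rw [Real.norm_eq_abs, hFeq k t ht, abs_mul, abs_of_nonneg (hbase_nonneg k t ht)]
    rw [setIntegral_congr_fun measurableSet_Ioo this, MeasureTheory.integral_const_mul,
      subst_eq (hak k) hb, hJ]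
  -- summability of norm integrals
  have habs_d : ∀ k : ℕ, |d k| = Real.Gamma (α+1) * ((lam/2)^2)^k /
      ((Nat.factorial k : ℝ) * Real.Gamma ((k:ℝ)+α+1)) * e := by
    intro k
    rw [hd]
    simp only []
    rw [abs_mul, abs_of_pos he_pos, abs_term hα k]
  have hkb : ∀ k : ℕ, ((k:ℝ)+α+1) + (β-α) = (k:ℝ) + β + 1 := fun k => by ring
  have hGkβ : ∀ k : ℕ, 0 < Real.Gamma ((k:ℝ) + β + 1) := gamma_pos_k hβ'
  have hsum_norm : Summable (fun k : ℕ => |d k| * J k) := by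
    have h0 := (summable_g hβ' ((lam/2)^2) (by positivity)).mul_left
      (Real.Gamma (α+1) * e * Real.Gamma (β-α) / (2 * Real.Gamma (β+1)))
    refine h0.congr fun k => ?_
    rw [habs_d, hJ]
    simp only []
    rw [hkb k]
    have hf : ((Nat.factorial k : ℕ) : ℝ) ≠ 0 := by positivity
    have := (gamma_pos_k hα k).ne'
    have := (hGkβ k).ne'
    field_simp
  -- the interchange
  rw [intervalIntegral.integral_of_le zero_le_one, MeasureTheory.integral_Ioc_eq_integral_Ioo]
  have hand : ∀ t : ℝ, (1 - t ^ 2) ^ (β - α - 1) * besselJ α (lam * t) *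
      (((2 : ℝ) ^ α * Real.Gamma (α + 1))⁻¹ * t ^ (2 * α + 1)) = ∑' k, F k t := by
    intro t
    rw [besselJ, ← he]
    rw [← tsum_mul_left (a := (1 - t ^ 2) ^ (β - α - 1)), ← tsum_mul_right]
  have hswap : ∫ t in Ioo (0:ℝ) 1, (∑' k, F k t) = ∑' k, ∫ t in Ioo (0:ℝ) 1, F k t := by
    refine MeasureTheory.integral_tsum (fun k => (hFint k).aestronglyMeasurable) ?_
    have hlint : ∀ k : ℕ, ∫⁻ t in Ioo (0:ℝ) 1, ‖F k t‖ₑ = ENNReal.ofReal (|d k| * J k) := by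
      intro k
      rw [← MeasureTheory.ofReal_integral_norm_eq_lintegral_enorm (hFint k), hFnorm k]
    have : (∑' k : ℕ, ∫⁻ t in Ioo (0:ℝ) 1, ‖F k t‖ₑ) = ENNReal.ofReal (∑' k, |d k| * J k) := by
      rw [ENNReal.ofReal_tsum_of_nonneg (fun k => mul_nonneg (abs_nonneg _) (hJpos k).le) hsum_norm]
      exact tsum_congr hlint
    rw [this]
    exact ENNReal.ofReal_ne_top
  rw [show (fun t => (1 - t ^ 2) ^ (β - α - 1) * besselJ α (lam * t) *
      (((2 : ℝ) ^ α * Real.Gamma (α + 1))⁻¹ * t ^ (2 * α + 1))) = fun t => ∑' k, F k t from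
    funext hand, hswap, tsum_congr hFval, ← tsum_mul_left, besselJ]
  refine tsum_congr fun k => ?_
  rw [hd, hJ]
  simp only []
  rw [hkb k]
  have h2pow : (2:ℝ) ^ (β - α - 1) * (2:ℝ) ^ α * 2 = (2:ℝ) ^ β := by
    nth_rewrite 3 [show (2:ℝ) = (2:ℝ) ^ (1:ℝ) by rw [Real.rpow_one]]
    rw [← Real.rpow_add two_pos, ← Real.rpow_add two_pos]
    congr 1
    ring
  have hf : ((Nat.factorial k : ℕ) : ℝ) ≠ 0 := by positivity
  have hg1 := (gamma_pos_k hα k).ne'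
  have hg2 := (hGkβ k).ne'
  rw [he]
  field_simp
  rw [← h2pow]
  ring
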